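/- For all real numbers γ₀, γ with 0 < γ₀ < γ < 1, the trapezoid T(γ) admits a dissection into two pieces, one of which is a parallelogram (an invertible affine image of the unit square [0,1]²) and the other affinely equivalent to T(γ₀). -/

import Mathlib

open Set

/-- For `0 < α < β < 1`, `Qab α β` is the convex quadrangle `Q(α,β)` with vertices
`a = (0,0)`, `b = (1−α,0)`, `c = (1−β, 1−(1−β)/(1−α))`, `d = (0, 1−α(1−β)/((1−α)β))`. -/
noncomputable def Qab (α β : ℝ) : Set (ℝ × ℝ) :=
  convexHull ℝ {((0 : ℝ), (0 : ℝ)), (1 - α, 0), (1 - β, 1 - (1 - β) / (1 - α)),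
    (0, 1 - α * (1 - β) / ((1 - α) * β))}

/-- For `0 < γ < 1`, `Tg γ` is the trapezoid `T(γ)` with vertices
`(0,0)`, `(1,0)`, `(γ,1)`, `(0,1)`. -/
noncomputable def Tg (γ : ℝ) : Set (ℝ × ℝ) :=
  convexHull ℝ {((0 : ℝ), (0 : ℝ)), (1, 0), (γ, 1), (0, 1)}

/-- `B` is the image of `A` under an invertible affine map of the plane,
i.e. `A` and `B` are affinely equivalent. -/
def AffineCopy (A B : Set (ℝ × ℝ)) : Prop :=
  ∃ φ : (ℝ × ℝ) ≃ᵃ[ℝ] (ℝ × ℝ), φ '' A = B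

/-- The affine equivalence `(x, y) ↦ (a x + b, y)` for `a ≠ 0`. -/
noncomputable def scaleShift (a b : ℝ) (ha : a ≠ 0) : (ℝ × ℝ) ≃ᵃ[ℝ] (ℝ × ℝ) :=
  (((LinearEquiv.smulOfNeZero ℝ ℝ a ha).prodCongr (LinearEquiv.refl ℝ ℝ)).toAffineEquiv).trans
    (AffineEquiv.constVAdd ℝ (ℝ × ℝ) (b, 0))

lemma scaleShift_apply (a b : ℝ) (ha : a ≠ 0) (p : ℝ × ℝ) :
    scaleShift a b ha p = (a * p.1 + b, p.2) := by
  simp [scaleShift, LinearEquiv.smulOfNeZero, LinearEquiv.smulOfUnit,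
    DistribMulAction.toLinearEquiv, Prod.ext_iff, smul_eq_mul, add_comm]

/-- Half-space description of the trapezoid with vertices `(a,0)`, `(1,0)`, `(c,1)`, `(a,1)`. -/
lemma trap_eq (a c : ℝ) (hac : a ≤ c) (hc : c ≤ 1) :
    convexHull ℝ {((a:ℝ), (0:ℝ)), (1, 0), (c, 1), (a, 1)} =
      {p : ℝ × ℝ | a ≤ p.1 ∧ 0 ≤ p.2 ∧ p.2 ≤ 1 ∧ p.1 + (1 - c) * p.2 ≤ 1} := by
  set S : Set (ℝ × ℝ) := {p : ℝ × ℝ | a ≤ p.1 ∧ 0 ≤ p.2 ∧ p.2 ≤ 1 ∧ p.1 + (1 - c) * p.2 ≤ 1}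
  have hS : Convex ℝ S := by
    intro p hp q hq α β hα hβ hαβ
    obtain ⟨h1, h2, h3, h4⟩ := hp
    obtain ⟨k1, k2, k3, k4⟩ := hq
    refine ⟨?_, ?_, ?_, ?_⟩ <;>
      simp only [Prod.fst_add, Prod.snd_add, Prod.smul_fst, Prod.smul_snd, smul_eq_mul] <;>
      nlinarith
  apply le_antisymm
  · apply convexHull_min _ hS
    intro p hp
    simp only [mem_insert_iff, mem_singleton_iff] at hp
    rcases hp with rfl | rfl | rfl | rfl <;>
      refine ⟨?_, ?_, ?_, ?_⟩ <;> simp only [mem_setOf_eq] <;> norm_num <;> nlinarith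
  · intro p hp
    obtain ⟨h1, h2, h3, h4⟩ := hp
    have conv := convex_convexHull ℝ ({((a:ℝ), (0:ℝ)), (1, 0), (c, 1), (a, 1)} : Set (ℝ × ℝ))
    have sub := subset_convexHull ℝ ({((a:ℝ), (0:ℝ)), (1, 0), (c, 1), (a, 1)} : Set (ℝ × ℝ))
    have hv1 : ((a:ℝ), (0:ℝ)) ∈ convexHull ℝ ({((a:ℝ), (0:ℝ)), (1, 0), (c, 1), (a, 1)} : Set (ℝ × ℝ)) := sub (by simp)
    have hv2 : ((1:ℝ), (0:ℝ)) ∈ convexHull ℝ ({((a:ℝ), (0:ℝ)), (1, 0), (c, 1), (a, 1)} : Set (ℝ × ℝ)) := sub (by simp)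
    have hv3 : ((c:ℝ), (1:ℝ)) ∈ convexHull ℝ ({((a:ℝ), (0:ℝ)), (1, 0), (c, 1), (a, 1)} : Set (ℝ × ℝ)) := sub (by simp)
    have hv4 : ((a:ℝ), (1:ℝ)) ∈ convexHull ℝ ({((a:ℝ), (0:ℝ)), (1, 0), (c, 1), (a, 1)} : Set (ℝ × ℝ)) := sub (by simp)
    set y := p.2
    have hL : ((a:ℝ), y) ∈ convexHull ℝ ({((a:ℝ), (0:ℝ)), (1, 0), (c, 1), (a, 1)} : Set (ℝ × ℝ)) := by
      have := conv hv1 hv4 (by linarith : (0:ℝ) ≤ 1 - y) h2 (by ring)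
      have e : (1 - y) • ((a:ℝ), (0:ℝ)) + y • ((a:ℝ), (1:ℝ)) = ((a:ℝ), y) := by
        simp only [Prod.smul_mk, smul_eq_mul, Prod.mk_add_mk, mul_one, mul_zero, Prod.mk.injEq]
        constructor <;> ring
      rwa [e] at this
    have hR : ((1 - (1-c)*y : ℝ), y) ∈ convexHull ℝ ({((a:ℝ), (0:ℝ)), (1, 0), (c, 1), (a, 1)} : Set (ℝ × ℝ)) := by
      have := conv hv2 hv3 (by linarith : (0:ℝ) ≤ 1 - y) h2 (by ring)
      have e : (1 - y) • ((1:ℝ), (0:ℝ)) + y • ((c:ℝ), (1:ℝ)) = ((1 - (1-c)*y : ℝ), y) := by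
        simp only [Prod.smul_mk, smul_eq_mul, Prod.mk_add_mk, mul_one, mul_zero, Prod.mk.injEq]
        constructor <;> ring
      rwa [e] at this
    set d := 1 - (1-c)*y - a with hd
    have hdx : p.1 - a ≤ d := by simp [hd]; linarith
    have hd0 : 0 ≤ d := le_trans (by linarith) hdx
    rcases eq_or_lt_of_le hd0 with hdz | hdz
    · have : p.1 = a := le_antisymm (by linarith) h1
      have : p = ((a:ℝ), y) := Prod.ext (by simpa using this) rfl
      rw [this]; exact hL
    · set t := (p.1 - a) / d
      have ht0 : 0 ≤ t := div_nonneg (by linarith) hd0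
      have ht1 : t ≤ 1 := by
        rw [div_le_one hdz]; exact hdx
      have := conv hL hR (by linarith : (0:ℝ) ≤ 1 - t) ht0 (by ring)
      have e : (1 - t) • ((a:ℝ), y) + t • ((1 - (1-c)*y : ℝ), y) = p := by
        have ht : t * d = p.1 - a := div_mul_cancel₀ _ (ne_of_gt hdz)
        refine Prod.ext ?_ ?_
        · simp only [Prod.fst_add, Prod.smul_fst, smul_eq_mul]
          nlinarith [ht]
        · simp only [Prod.snd_add, Prod.smul_snd, smul_eq_mul]; ring
      rwa [e] at this

/-- For `0 < γ₀ < γ < 1`, the trapezoid `T(γ)` admits a dissection into a parallelogram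
(an invertible affine image of the unit square) and an affine copy of `T(γ₀)`. -/
theorem Tg_into_parallelogram_and_Tg (γ₀ γ : ℝ)
    (h₀ : 0 < γ₀) (h₁ : γ₀ < γ) (h₂ : γ < 1) :
    ∃ P₁ P₂ : Set (ℝ × ℝ),
      P₁ ∪ P₂ = Tg γ ∧ Disjoint (interior P₁) (interior P₂) ∧
      AffineCopy (Icc ((0 : ℝ), (0 : ℝ)) (1, 1)) P₁ ∧ AffineCopy (Tg γ₀) P₂ := by
  have hγ0 : γ₀ < 1 := lt_trans h₁ h₂
  have hden : (0:ℝ) < 1 - γ₀ := by linarith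
  set s : ℝ := (γ - γ₀) / (1 - γ₀) with hs_def
  have hs0 : 0 < s := div_pos (by linarith) hden
  have hsγ : s < γ := by
    rw [hs_def, div_lt_iff₀ hden]; nlinarith
  have hs1 : s < 1 := lt_trans hsγ h₂
  have hkey : (1 - s) * γ₀ + s = γ := by
    rw [hs_def]; field_simp; ring
  refine ⟨Icc ((0:ℝ), (0:ℝ)) (s, 1),
    convexHull ℝ {((s:ℝ), (0:ℝ)), (1, 0), (γ, 1), (s, 1)}, ?_, ?_, ?_, ?_⟩
  · -- union
    have hTg : Tg γ = {p : ℝ × ℝ | 0 ≤ p.1 ∧ 0 ≤ p.2 ∧ p.2 ≤ 1 ∧ p.1 + (1 - γ) * p.2 ≤ 1} := by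
      rw [Tg]; exact trap_eq 0 γ (by linarith) h₂.le
    rw [hTg, trap_eq s γ hsγ.le h₂.le]
    ext p
    simp only [mem_union, mem_Icc, Prod.le_def, mem_setOf_eq]
    constructor
    · rintro (⟨⟨ha, hb⟩, hc, hd⟩ | ⟨k1, k2, k3, k4⟩)
      · exact ⟨ha, hb, hd, by nlinarith⟩
      · exact ⟨by linarith, k2, k3, k4⟩
    · rintro ⟨k1, k2, k3, k4⟩
      rcases le_total p.1 s with h | h
      · exact Or.inl ⟨⟨k1, k2⟩, h, k3⟩
      · exact Or.inr ⟨h, k2, k3, k4⟩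
  · -- disjoint interiors
    have d1 : interior (Icc ((0:ℝ), (0:ℝ)) (s, 1)) ⊆ Prod.fst ⁻¹' Iio s := by
      have hsub : Icc ((0:ℝ), (0:ℝ)) (s, 1) ⊆ Prod.fst ⁻¹' Iic s := by
        intro p hp; exact hp.2.1
      calc interior (Icc ((0:ℝ), (0:ℝ)) (s, 1)) ⊆ interior (Prod.fst ⁻¹' Iic s) :=
            interior_mono hsub
        _ = Prod.fst ⁻¹' Iio s := by
            rw [← isOpenMap_fst.preimage_interior_eq_interior_preimage continuous_fst,
              interior_Iic]
    have d2 : interior (convexHull ℝ {((s:ℝ), (0:ℝ)), (1, 0), (γ, 1), (s, 1)}) ⊆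
        Prod.fst ⁻¹' Ioi s := by
      have hsub : convexHull ℝ {((s:ℝ), (0:ℝ)), (1, 0), (γ, 1), (s, 1)} ⊆
          Prod.fst ⁻¹' Ici s := by
        rw [trap_eq s γ hsγ.le h₂.le]; intro p hp; exact hp.1
      calc interior (convexHull ℝ {((s:ℝ), (0:ℝ)), (1, 0), (γ, 1), (s, 1)}) ⊆
            interior (Prod.fst ⁻¹' Ici s) := interior_mono hsub
        _ = Prod.fst ⁻¹' Ioi s := by
            rw [← isOpenMap_fst.preimage_interior_eq_interior_preimage continuous_fst,
              interior_Ici]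
    refine Set.disjoint_left.2 fun p hp1 hp2 => ?_
    have := d1 hp1
    have := d2 hp2
    simp only [mem_preimage, mem_Iio, mem_Ioi] at *
    linarith
  · -- parallelogram
    refine ⟨scaleShift s 0 hs0.ne', ?_⟩
    ext p
    simp only [mem_image, scaleShift_apply, mem_Icc, Prod.le_def, add_zero]
    constructor
    · rintro ⟨q, ⟨⟨hq1, hq2⟩, hq3, hq4⟩, rfl⟩
      exact ⟨⟨by positivity, hq2⟩, by show s * q.1 ≤ s; nlinarith, hq4⟩
    · rintro ⟨⟨k1, k2⟩, k3, k4⟩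
      refine ⟨(p.1 / s, p.2), ⟨⟨div_nonneg k1 hs0.le, k2⟩, (div_le_one hs0).2 k3, k4⟩, ?_⟩
      exact Prod.ext (by field_simp) rfl
  · -- affine copy of Tg γ₀
    refine ⟨scaleShift (1 - s) s (by linarith : (0:ℝ) < 1 - s).ne', ?_⟩
    rw [Tg, show ⇑(scaleShift (1 - s) s (by linarith : (0:ℝ) < 1 - s).ne') =
      ⇑(scaleShift (1 - s) s (by linarith : (0:ℝ) < 1 - s).ne').toAffineMap from rfl,
      AffineMap.image_convexHull]
    congr 1
    simp only [AffineEquiv.coe_toAffineMap, image_insert_eq, image_singleton, scaleShift_apply]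
    norm_num [hkey]
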